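/- Suppose the kernel k on a compact metric space Ω is continuous, bounded, and characteristic. Then a sequence of probability measures p_n converges weakly to q if and only if MMD_k(p_n, q) = ‖μ_{p_n} − μ_q‖_H → 0. Consequently, a trajectory is ergodic with respect to q if and only if its ergodic MMD metric E_MMD(x,q,t) = ‖μ_{ρ_{x,t}} − μ_q‖²_H tends to 0 as t → ∞. -/

import Mathlib

set_option autoImplicit false

open MeasureTheory Filter
open scoped RealInnerProductSpace


set_option maxHeartbeats 1000000
open MeasureTheory Filter Topology TopologicalSpace BoundedContinuousFunction
open scoped NNReal ENNReal

section aux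
variable {Ω : Type*} [MetricSpace Ω] [CompactSpace Ω] [MeasurableSpace Ω] [BorelSpace Ω]

/-- Integration of a fixed bounded continuous function is continuous on probability measures. -/
lemma mmdaux_contIntegral (f : Ω →ᵇ ℝ) :
    Continuous (fun p : ProbabilityMeasure Ω => ∫ ω, f ω ∂(p : Measure Ω)) := by
  rw [continuous_iff_continuousAt]
  intro p
  exact ProbabilityMeasure.tendsto_iff_forall_integral_tendsto.mp tendsto_id f

lemma mmdaux_integral_dist_le (p : ProbabilityMeasure Ω) (f g : Ω →ᵇ ℝ) :
    dist (∫ ω, f ω ∂(p : Measure Ω)) (∫ ω, g ω ∂(p : Measure Ω)) ≤ dist f g := by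
  rw [dist_eq_norm, ← integral_sub (f.integrable _) (g.integrable _)]
  calc ‖∫ ω, (f ω - g ω) ∂(p : Measure Ω)‖
      ≤ ∫ ω, ‖f ω - g ω‖ ∂(p : Measure Ω) := norm_integral_le_integral_norm _
    _ ≤ ∫ _, dist f g ∂(p : Measure Ω) := by
        apply integral_mono ((f.integrable _).sub (g.integrable _)).norm (integrable_const _)
        intro ω
        simpa [dist_eq_norm] using BoundedContinuousFunction.dist_coe_le_dist ω (f := f) (g := g)
    _ = dist f g := by simp

lemma mmdaux_t2weak {H : Type*} [NormedAddCommGroup H] [NormedSpace ℝ H] :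
    T2Space (WeakSpace ℝ H) := by
  constructor
  intro u v huv
  obtain ⟨l, hl⟩ := SeparatingDual.exists_separating_of_ne (R := ℝ) (V := H) huv
  exact separated_by_continuous (WeakBilin.eval_continuous ((topDualPairing ℝ H).flip) l) hl



lemma mmdaux_seqCompact (P : ℕ → ProbabilityMeasure Ω) :
    ∃ (R : ProbabilityMeasure Ω) (φ : ℕ → ℕ), StrictMono φ ∧
      Tendsto (fun n => P (φ n)) atTop (𝓝 R) := by
  classical
  -- separability of the space of bounded continuous functions
  haveI : SeparableSpace (Ω →ᵇ ℝ) :=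
    (ContinuousMap.isometryEquivBoundedOfCompact Ω ℝ).surjective.denseRange.separableSpace
      (ContinuousMap.isometryEquivBoundedOfCompact Ω ℝ).isometry.continuous
  haveI : Nonempty (Ω →ᵇ ℝ) := ⟨0⟩
  set D : ℕ → (Ω →ᵇ ℝ) := denseSeq (Ω →ᵇ ℝ) with hD
  have hDdense : DenseRange D := denseRange_denseSeq (Ω →ᵇ ℝ)
  -- diagonal extraction via compactness of a countable product of intervals
  have hbound : ∀ (i n : ℕ), ∫ ω, (D i) ω ∂(P n : Measure Ω) ∈ Set.Icc (-‖D i‖) ‖D i‖ := by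
    intro i n
    rw [Set.mem_Icc, ← abs_le, ← Real.norm_eq_abs]
    calc ‖∫ ω, (D i) ω ∂(P n : Measure Ω)‖ ≤ ∫ ω, ‖(D i) ω‖ ∂(P n : Measure Ω) :=
          norm_integral_le_integral_norm _
      _ ≤ ∫ _, ‖D i‖ ∂(P n : Measure Ω) := by
          apply integral_mono ((D i).integrable _).norm (integrable_const _)
          intro ω; exact (D i).norm_coe_le_norm ω
      _ = ‖D i‖ := by simp
  set Y := Π i : ℕ, (Set.Icc (-‖D i‖) ‖D i‖ : Set ℝ) with hY
  set u : ℕ → Y := fun n i => ⟨∫ ω, (D i) ω ∂(P n : Measure Ω), hbound i n⟩ with hu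
  obtain ⟨a, -, φ, hφmono, hφlim⟩ :=
    (isCompact_univ : IsCompact (Set.univ : Set Y)).isSeqCompact (x := u) (fun n => Set.mem_univ _)
  have hDlim : ∀ i : ℕ, Tendsto (fun n => ∫ ω, (D i) ω ∂(P (φ n) : Measure Ω)) atTop (𝓝 (a i : ℝ)) := by
    intro i
    exact (continuous_subtype_val.tendsto _).comp (tendsto_pi_nhds.mp hφlim i)
  -- all integrals along the subsequence converge
  have hCauchy : ∀ f : Ω →ᵇ ℝ, ∃ c : ℝ,
      Tendsto (fun n => ∫ ω, f ω ∂(P (φ n) : Measure Ω)) atTop (𝓝 c) := by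
    intro f
    apply cauchySeq_tendsto_of_complete
    rw [Metric.cauchySeq_iff']
    intro ε hε
    obtain ⟨i, hi⟩ := hDdense.exists_dist_lt f (by positivity : (0:ℝ) < ε/3)
    obtain ⟨N, hN⟩ := Metric.cauchySeq_iff'.mp (hDlim i).cauchySeq (ε/3) (by positivity)
    refine ⟨N, fun n hn => ?_⟩
    calc dist (∫ ω, f ω ∂(P (φ n) : Measure Ω)) (∫ ω, f ω ∂(P (φ N) : Measure Ω))
        ≤ dist (∫ ω, f ω ∂(P (φ n) : Measure Ω)) (∫ ω, (D i) ω ∂(P (φ n) : Measure Ω))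
          + dist (∫ ω, (D i) ω ∂(P (φ n) : Measure Ω)) (∫ ω, (D i) ω ∂(P (φ N) : Measure Ω))
          + dist (∫ ω, (D i) ω ∂(P (φ N) : Measure Ω)) (∫ ω, f ω ∂(P (φ N) : Measure Ω)) :=
          dist_triangle4 _ _ _ _
      _ < ε/3 + ε/3 + ε/3 := by
          gcongr
          · exact lt_of_le_of_lt (mmdaux_integral_dist_le (P (φ n)) f (D i)) hi
          · exact hN n hn
          · rw [dist_comm]
            exact lt_of_le_of_lt (mmdaux_integral_dist_le (P (φ N)) f (D i)) hi
      _ = ε := by ring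
  -- the limit functional
  set L : (Ω →ᵇ ℝ) → ℝ := fun f => (hCauchy f).choose with hLdef
  have hL : ∀ f : Ω →ᵇ ℝ, Tendsto (fun n => ∫ ω, f ω ∂(P (φ n) : Measure Ω)) atTop (𝓝 (L f)) :=
    fun f => (hCauchy f).choose_spec
  have hLadd : ∀ f g : Ω →ᵇ ℝ, L (f + g) = L f + L g := by
    intro f g
    refine tendsto_nhds_unique (hL (f + g)) ?_
    have := (hL f).add (hL g)
    apply this.congr
    intro n
    rw [← integral_add (f.integrable _) (g.integrable _)]
    simp
  have hLmono : ∀ f g : Ω →ᵇ ℝ, (∀ x, f x ≤ g x) → L f ≤ L g := by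
    intro f g hfg
    exact le_of_tendsto_of_tendsto' (hL f) (hL g)
      (fun n => integral_mono (f.integrable _) (g.integrable _) hfg)
  have hLone : L 1 = 1 := by
    refine tendsto_nhds_unique (hL 1) ?_
    have : ∀ n : ℕ, ∫ ω, (1 : Ω →ᵇ ℝ) ω ∂(P (φ n) : Measure Ω) = 1 := by
      intro n; simp
    simpa [this] using tendsto_const_nhds
  have hLnn : ∀ f : Ω →ᵇ ℝ, (∀ x, 0 ≤ f x) → 0 ≤ L f := by
    intro f hf
    have h0 : L 0 = 0 := by
      refine tendsto_nhds_unique (hL 0) ?_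
      simpa using (tendsto_const_nhds : Tendsto (fun _ : ℕ => (0:ℝ)) atTop (𝓝 0))
    have := hLmono 0 f (by simpa using hf)
    rwa [h0] at this
  -- constraint sets and the content
  set S : Set Ω → Set ℝ := fun K =>
    {r | ∃ f : Ω →ᵇ ℝ, (∀ ξ, 0 ≤ f ξ) ∧ (∀ ξ ∈ K, 1 ≤ f ξ) ∧ L f = r} with hS
  have hSne : ∀ K : Set Ω, (S K).Nonempty := by
    intro K
    exact ⟨L 1, 1, fun ξ => by simp, fun ξ _ => by simp, rfl⟩
  have hSnn : ∀ K : Set Ω, ∀ r ∈ S K, (0:ℝ) ≤ r := by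
    rintro K r ⟨f, hf0, -, rfl⟩
    exact hLnn f hf0
  have hSbdd : ∀ K : Set Ω, BddBelow (S K) := fun K => ⟨0, hSnn K⟩
  have hSmono : ∀ K₁ K₂ : Set Ω, K₁ ⊆ K₂ → sInf (S K₁) ≤ sInf (S K₂) := by
    intro K₁ K₂ hsub
    apply csInf_le_csInf (hSbdd K₁) (hSne K₂)
    rintro r ⟨f, hf0, hf1, rfl⟩
    exact ⟨f, hf0, fun ξ hξ => hf1 ξ (hsub hξ), rfl⟩
  have hSInf_nn : ∀ K : Set Ω, 0 ≤ sInf (S K) := fun K => Real.sInf_nonneg (hSnn K)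

  -- Urysohn helper
  have urysohn : ∀ A B : Set Ω, IsClosed A → IsClosed B → Disjoint A B →
      ∃ g : Ω →ᵇ ℝ, (∀ ξ, g ξ ∈ Set.Icc (0:ℝ) 1) ∧ (∀ ξ ∈ A, g ξ = 1) ∧ (∀ ξ ∈ B, g ξ = 0) := by
    intro A B hA hB hAB
    obtain ⟨g, hg0, hg1, hg01⟩ := exists_continuous_zero_one_of_isClosed hB hA hAB.symm
    exact ⟨BoundedContinuousFunction.mkOfCompact g, hg01,
      fun ξ hξ => by simpa using hg1 hξ, fun ξ hξ => by simpa using hg0 hξ⟩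
  have hsup_le : ∀ K₁ K₂ : Set Ω, sInf (S (K₁ ∪ K₂)) ≤ sInf (S K₁) + sInf (S K₂) := by
    intro K₁ K₂
    refine le_of_forall_pos_le_add ?_
    intro ε hε
    obtain ⟨r₁, hr₁S, hr₁⟩ := Real.lt_sInf_add_pos (hSne K₁) (show (0:ℝ) < ε/2 by positivity)
    obtain ⟨r₂, hr₂S, hr₂⟩ := Real.lt_sInf_add_pos (hSne K₂) (show (0:ℝ) < ε/2 by positivity)
    obtain ⟨f₁, hf₁0, hf₁1, hf₁L⟩ := hr₁S
    obtain ⟨f₂, hf₂0, hf₂1, hf₂L⟩ := hr₂S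
    have hmem : L (f₁ + f₂) ∈ S (K₁ ∪ K₂) := by
      refine ⟨f₁ + f₂, ?_, ?_, rfl⟩
      · intro ξ; simpa using add_nonneg (hf₁0 ξ) (hf₂0 ξ)
      · intro ξ hξ
        rcases hξ with hξ | hξ
        · simpa using le_add_of_le_of_nonneg (hf₁1 ξ hξ) (hf₂0 ξ)
        · simpa using le_add_of_nonneg_of_le (hf₁0 ξ) (hf₂1 ξ hξ)
    calc sInf (S (K₁ ∪ K₂)) ≤ L (f₁ + f₂) := csInf_le (hSbdd _) hmem
      _ = L f₁ + L f₂ := hLadd f₁ f₂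
      _ = r₁ + r₂ := by rw [hf₁L, hf₂L]
      _ ≤ (sInf (S K₁) + ε/2) + (sInf (S K₂) + ε/2) := add_le_add hr₁.le hr₂.le
      _ = sInf (S K₁) + sInf (S K₂) + ε := by ring
  have hsup_disj : ∀ K₁ K₂ : Set Ω, IsClosed K₁ → IsClosed K₂ → Disjoint K₁ K₂ →
      sInf (S K₁) + sInf (S K₂) ≤ sInf (S (K₁ ∪ K₂)) := by
    intro K₁ K₂ hc₁ hc₂ hdis
    refine le_csInf (hSne _) ?_
    rintro r ⟨f, hf0, hf1, rfl⟩
    obtain ⟨g, hg01, hgA, hgB⟩ := urysohn K₁ K₂ hc₁ hc₂ hdis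
    have h1 : sInf (S K₁) ≤ L (f * g) := by
      refine csInf_le (hSbdd _) ⟨f * g, ?_, ?_, rfl⟩
      · intro ξ; simpa using mul_nonneg (hf0 ξ) (hg01 ξ).1
      · intro ξ hξ
        have : (f * g) ξ = f ξ * g ξ := rfl
        rw [this, hgA ξ hξ, mul_one]
        exact hf1 ξ (Set.mem_union_left _ hξ)
    have h2 : sInf (S K₂) ≤ L (f * (1 - g)) := by
      refine csInf_le (hSbdd _) ⟨f * (1 - g), ?_, ?_, rfl⟩
      · intro ξ
        have : (f * (1 - g)) ξ = f ξ * (1 - g ξ) := rfl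
        rw [this]
        exact mul_nonneg (hf0 ξ) (by linarith [(hg01 ξ).2])
      · intro ξ hξ
        have : (f * (1 - g)) ξ = f ξ * (1 - g ξ) := rfl
        rw [this, hgB ξ hξ]
        simpa using hf1 ξ (Set.mem_union_right _ hξ)
    have h3 : L (f * g) + L (f * (1 - g)) = L f := by
      rw [← hLadd]
      congr 1
      ring
    linarith
  -- the content and its measure
  set ν : Content Ω :=
    { toFun := fun K => Real.toNNReal (sInf (S K))
      mono' := fun K₁ K₂ h => Real.toNNReal_mono (hSmono _ _ h)
      sup_disjoint' := by
        intro K₁ K₂ hdis h₁ h₂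
        have hco : ((K₁ ⊔ K₂ : TopologicalSpace.Compacts Ω) : Set Ω) = ↑K₁ ∪ ↑K₂ := rfl
        apply le_antisymm
        · rw [← Real.toNNReal_add (hSInf_nn _) (hSInf_nn _)]
          exact Real.toNNReal_mono (hco ▸ hsup_le ↑K₁ ↑K₂)
        · rw [← Real.toNNReal_add (hSInf_nn _) (hSInf_nn _)]
          exact Real.toNNReal_mono (hco ▸ hsup_disj ↑K₁ ↑K₂ h₁ h₂ hdis)
      sup_le' := by
        intro K₁ K₂
        rw [← Real.toNNReal_add (hSInf_nn _) (hSInf_nn _)]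
        exact Real.toNNReal_mono (hsup_le ↑K₁ ↑K₂) } with hν
  set R : Measure Ω := ν.measure with hR
  have hSuniv : sInf (S Set.univ) = 1 := by
    apply le_antisymm
    · exact csInf_le (hSbdd _) ⟨1, fun ξ => by simp, fun ξ _ => by simp, hLone⟩
    · refine le_csInf (hSne _) ?_
      rintro r ⟨f, hf0, hf1, rfl⟩
      have := hLmono 1 f (fun ξ => by simpa using hf1 ξ (Set.mem_univ ξ))
      rwa [hLone] at this
  have hRuniv : R Set.univ = 1 := by
    rw [hR, Content.measure_apply _ MeasurableSet.univ, Content.outerMeasure_of_isOpen _ _ isOpen_univ]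
    apply le_antisymm
    · refine iSup_le fun K => iSup_le fun _ => ?_
      have : ν.toFun K ≤ Real.toNNReal (sInf (S Set.univ)) :=
        Real.toNNReal_mono (hSmono _ _ (Set.subset_univ _))
      rw [hSuniv] at this
      calc (ν.toFun K : ℝ≥0∞) ≤ ((Real.toNNReal 1 : ℝ≥0) : ℝ≥0∞) := ENNReal.coe_le_coe.2 this
        _ = 1 := by simp
    · have := ν.le_innerContent ⟨Set.univ, isCompact_univ⟩ ⟨Set.univ, isOpen_univ⟩
        (subset_refl _)
      refine le_trans ?_ this
      show (1 : ℝ≥0∞) ≤ ((Real.toNNReal (sInf (S Set.univ)) : ℝ≥0) : ℝ≥0∞)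
      rw [hSuniv]
      simp
  haveI hRprob : IsProbabilityMeasure R := ⟨hRuniv⟩
  set RP : ProbabilityMeasure Ω := ⟨R, hRprob⟩ with hRP
  have hlim : ∀ G : Set Ω, IsOpen G → RP G ≤ atTop.liminf (fun n => (P (φ n)) G) := by
    intro G hG
    have key : ∀ K : TopologicalSpace.Compacts Ω, (K : Set Ω) ⊆ G →
        Real.toNNReal (sInf (S K)) ≤ atTop.liminf (fun n => (P (φ n)) G) := by
      intro K hKG
      have hdisj : Disjoint (K : Set Ω) Gᶜ := disjoint_compl_right.mono_left hKG
      obtain ⟨g, hg01, hgK, hgGc⟩ := urysohn K Gᶜ K.isCompact.isClosed hG.isClosed_compl hdisj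
      have h1 : sInf (S K) ≤ L g :=
        csInf_le (hSbdd _) ⟨g, fun ξ => (hg01 ξ).1, fun ξ hξ => (hgK ξ hξ).ge, rfl⟩
      have h2 : ∀ n, ∫ ω, g ω ∂(P (φ n) : Measure Ω) ≤ ((P (φ n)) G : ℝ≥0) := by
        intro n
        have step : ∫ ω, g ω ∂(P (φ n) : Measure Ω)
            ≤ ∫ ω, G.indicator (fun _ => (1:ℝ)) ω ∂(P (φ n) : Measure Ω) := by
          apply integral_mono (g.integrable _)
            ((integrable_const (1:ℝ)).indicator hG.measurableSet)
          intro ξ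
          by_cases hξ : ξ ∈ G
          · simpa [Set.indicator_of_mem hξ] using (hg01 ξ).2
          · rw [Set.indicator_of_notMem hξ]
            exact (hgGc ξ hξ).le
        rw [integral_indicator_const _ hG.measurableSet] at step
        have : (((P (φ n)) G : ℝ≥0) : ℝ) = ((P (φ n) : Measure Ω) G).toReal := by
          rw [← ProbabilityMeasure.ennreal_coeFn_eq_coeFn_toMeasure (P (φ n)) G,
            ENNReal.coe_toReal]
        simpa using step
      have h3 : Tendsto (fun n => Real.toNNReal (∫ ω, g ω ∂(P (φ n) : Measure Ω))) atTop
          (𝓝 (Real.toNNReal (L g))) := (continuous_real_toNNReal.tendsto _).comp (hL g)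
      have h4 := h3.liminf_eq
      have h5 : atTop.liminf (fun n => Real.toNNReal (∫ ω, g ω ∂(P (φ n) : Measure Ω)))
          ≤ atTop.liminf (fun n => (P (φ n)) G) := by
        apply liminf_le_liminf
        · apply Eventually.of_forall
          intro n
          have := Real.toNNReal_mono (h2 n)
          rwa [Real.toNNReal_coe] at this
        · exact ⟨0, Filter.eventually_map.2 (Eventually.of_forall fun n => zero_le)⟩
        · exact (Filter.IsBoundedUnder.isCoboundedUnder_ge
            ⟨1, Filter.eventually_map.2
              (Eventually.of_forall fun n => ProbabilityMeasure.apply_le_one _ _)⟩)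
      calc Real.toNNReal (sInf (S K)) ≤ Real.toNNReal (L g) := Real.toNNReal_mono h1
        _ ≤ atTop.liminf (fun n => (P (φ n)) G) := h4 ▸ h5
    have h6 : (R G : ℝ≥0∞) ≤ ((atTop.liminf (fun n => (P (φ n)) G) : ℝ≥0) : ℝ≥0∞) := by
      rw [hR, Content.measure_apply _ hG.measurableSet, Content.outerMeasure_of_isOpen _ _ hG]
      refine iSup_le fun K => iSup_le fun hKG => ?_
      exact ENNReal.coe_le_coe.2 (key K hKG)
    have h7 : (RP G : ℝ≥0) = (R G).toNNReal := rfl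
    rw [h7]
    have := ENNReal.toNNReal_mono (by simp) h6
    rwa [ENNReal.toNNReal_coe] at this
  exact ⟨RP, φ, hφmono, tendsto_of_forall_isOpen_le_liminf hlim⟩


lemma mmdaux_contMu {H : Type*} [NormedAddCommGroup H] [NormedSpace ℝ H] [CompleteSpace H]
    (φ : Ω → H) (hφ : Continuous φ) :
    Continuous (fun p : ProbabilityMeasure Ω => ∫ ω, φ ω ∂(p : Measure Ω)) := by
  haveI := mmdaux_t2weak (H := H)
  set K : Set H := closure (convexHull ℝ (Set.range φ)) with hK
  have hKcpt : IsCompact K := by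
    rw [hK]
    exact TotallyBounded.isCompact_of_isClosed
      ((totallyBounded_convexHull.2 ((isCompact_range hφ).totallyBounded)).closure)
      isClosed_closure
  have hint : ∀ p : ProbabilityMeasure Ω, Integrable φ (p : Measure Ω) := fun p =>
    hφ.integrable_of_hasCompactSupport
      (IsCompact.of_isClosed_subset isCompact_univ (isClosed_tsupport φ) (Set.subset_univ _))
  have hmem : ∀ p : ProbabilityMeasure Ω, (∫ ω, φ ω ∂(p : Measure Ω)) ∈ K := fun p =>
    ((convex_convexHull ℝ _).closure).integral_mem isClosed_closure
      (Filter.Eventually.of_forall fun ω =>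
        subset_closure (subset_convexHull ℝ _ (Set.mem_range_self ω))) (hint p)
  haveI : CompactSpace K := isCompact_iff_compactSpace.mp hKcpt
  have hembinj : Function.Injective (fun k : K => toWeakSpaceCLM ℝ H (k : H)) := by
    intro a b hab
    apply Subtype.ext
    exact (toWeakSpace ℝ H).injective hab
  have emb : Topology.IsClosedEmbedding (fun k : K => toWeakSpaceCLM ℝ H (k : H)) :=
    Continuous.isClosedEmbedding ((toWeakSpaceCLM ℝ H).continuous.comp continuous_subtype_val)
      hembinj
  have hg : Continuous (fun p : ProbabilityMeasure Ω =>
      (⟨∫ ω, φ ω ∂(p : Measure Ω), hmem p⟩ : K)) := by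
    rw [emb.isInducing.continuous_iff]
    apply WeakBilin.continuous_of_continuous_eval
    intro l
    have hl : ∀ p : ProbabilityMeasure Ω,
        l (∫ ω, φ ω ∂(p : Measure Ω)) = ∫ ω, l (φ ω) ∂(p : Measure Ω) :=
      fun p => (ContinuousLinearMap.integral_comp_comm l (hint p)).symm
    have := mmdaux_contIntegral (Ω := Ω)
      (BoundedContinuousFunction.mkOfCompact ⟨fun ω => l (φ ω), l.continuous.comp hφ⟩)
    convert this using 2 with p
    exact hl p
  exact continuous_subtype_val.comp hg

lemma mmdaux_tendsto_iff {H' : Type*} [TopologicalSpace H'] [T2Space H']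
    (μm : ProbabilityMeasure Ω → H') (hcont : Continuous μm) (hinj : Function.Injective μm)
    {ι : Type*} {l : Filter ι} [l.IsCountablyGenerated] (P : ι → ProbabilityMeasure Ω)
    (Q : ProbabilityMeasure Ω) :
    Tendsto P l (𝓝 Q) ↔ Tendsto (fun i => μm (P i)) l (𝓝 (μm Q)) := by
  constructor
  · intro h
    exact (hcont.tendsto Q).comp h
  · intro h
    apply tendsto_of_subseq_tendsto
    intro ns hns
    obtain ⟨R, ms, hms, hR⟩ := mmdaux_seqCompact (fun n => P (ns n))
    have h1 : Tendsto (fun n => μm (P (ns (ms n)))) atTop (𝓝 (μm R)) := (hcont.tendsto R).comp hR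
    have h2 : Tendsto (fun n => μm (P (ns (ms n)))) atTop (𝓝 (μm Q)) :=
      h.comp (hns.comp hms.tendsto_atTop)
    have hRQ : R = Q := hinj (tendsto_nhds_unique h1 h2)
    exact ⟨ms, hRQ ▸ hR⟩

end aux


/-- **MMD metrizes weak convergence for characteristic kernels, and ergodicity is
equivalent to vanishing ergodic MMD.** Let `k(ω,ω') = ⟪φ ω, φ ω'⟫` be a continuous
bounded kernel on a compact metric space `Ω` whose mean embedding (realized as
`μ p = ∫ φ dp`) is injective on Borel probability measures. Then
(a) a sequence `P n` of probability measures converges weakly to `Q` iff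
`‖μ(P n) − μ Q‖ → 0`, and (b) a trajectory is ergodic w.r.t. `q` iff its ergodic MMD
metric `‖μ_{ρ_{x,t}} − μ_q‖² → 0` as `t → ∞`. -/
theorem mmd_metrizes_weak_convergence_and_ergodicity
    {X : Type*} [TopologicalSpace X]
    {Ω : Type*} [MetricSpace Ω] [CompactSpace Ω] [MeasurableSpace Ω] [BorelSpace Ω]
    {H : Type*} [NormedAddCommGroup H] [InnerProductSpace ℝ H] [CompleteSpace H]
    (φ : Ω → H) (hφ : Continuous φ)
    (μ : ProbabilityMeasure Ω → H)
    (hμ : ∀ p : ProbabilityMeasure Ω, μ p = ∫ ω, φ ω ∂(p : Measure Ω))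
    (hinj : Function.Injective μ)
    (σ : X → Ω) (hσ : Continuous σ) (x : ℝ → X) (hx : Continuous x)
    (q : ProbabilityMeasure Ω)
    (μρ : ℝ → H)
    (hμρ : ∀ t : ℝ, 0 < t → μρ t = (1 / t) • ∫ τ in (0:ℝ)..t, φ (σ (x τ))) :
    (∀ (P : ℕ → ProbabilityMeasure Ω) (Q : ProbabilityMeasure Ω),
        Tendsto P atTop (nhds Q) ↔
          Tendsto (fun n => ‖μ (P n) - μ Q‖) atTop (nhds 0)) ∧
    ((∀ f : Ω → ℝ, Continuous f →
        Tendsto (fun t : ℝ => (1 / t) * ∫ τ in (0:ℝ)..t, f (σ (x τ))) atTop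
          (nhds (∫ ω, f ω ∂(q : Measure Ω)))) ↔
      Tendsto (fun t : ℝ => ‖μρ t - μ q‖ ^ 2) atTop (nhds 0)) := by
  classical
  haveI : Nonempty Ω := by
    by_contra h
    rw [not_nonempty_iff] at h
    have h1 : (q : Measure Ω) Set.univ = 1 := measure_univ
    simp [Set.univ_eq_empty_iff.2 h] at h1
  have hμcont : Continuous μ := by
    have heq : μ = fun p : ProbabilityMeasure Ω => ∫ ω, φ ω ∂(p : Measure Ω) := funext hμ
    rw [heq]
    exact mmdaux_contMu φ hφ
  constructor
  · intro P Q
    rw [mmdaux_tendsto_iff μ hμcont hinj P Q]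
    exact tendsto_iff_norm_sub_tendsto_zero
  have hρex : ∀ t : ℝ, 0 < t → ∃ r : ProbabilityMeasure Ω,
      (∀ f : Ω →ᵇ ℝ, ∫ ω, f ω ∂(r : Measure Ω) = (1/t) * ∫ τ in (0:ℝ)..t, f (σ (x τ))) ∧
      μ r = μρ t := by
    intro t ht
    set m : Measure ℝ := (ENNReal.ofReal t)⁻¹ • (volume.restrict (Set.Ioc 0 t)) with hm
    have hmeas : Measurable (fun τ : ℝ => σ (x τ)) := (hσ.comp hx).measurable
    haveI : IsProbabilityMeasure m := by
      constructor
      rw [hm, Measure.smul_apply, Measure.restrict_apply MeasurableSet.univ, Set.univ_inter,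
        Real.volume_Ioc, sub_zero, smul_eq_mul]
      exact ENNReal.inv_mul_cancel
        (fun hc => absurd (ENNReal.ofReal_eq_zero.mp hc) (not_le.mpr ht)) ENNReal.ofReal_ne_top
    refine ⟨(⟨Measure.map (fun τ => σ (x τ)) m, Measure.isProbabilityMeasure_map hmeas.aemeasurable⟩ : ProbabilityMeasure Ω),
      ?_, ?_⟩
    · intro f
      show ∫ ω, f ω ∂(Measure.map (fun τ => σ (x τ)) m) = _
      rw [integral_map hmeas.aemeasurable f.continuous.aestronglyMeasurable, hm,
        integral_smul_measure, intervalIntegral.integral_of_le ht.le, ENNReal.toReal_inv,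
        ENNReal.toReal_ofReal ht.le, smul_eq_mul, one_div]
    · refine (hμ _).trans ?_
      rw [hμρ t ht]
      show ∫ ω, φ ω ∂(Measure.map (fun τ => σ (x τ)) m) = _
      rw [integral_map hmeas.aemeasurable hφ.aestronglyMeasurable, hm,
        integral_smul_measure, intervalIntegral.integral_of_le ht.le, ENNReal.toReal_inv,
        ENNReal.toReal_ofReal ht.le, one_div]
  set ρ : ℝ → ProbabilityMeasure Ω := fun t => if ht : 0 < t then (hρex t ht).choose else q
    with hρdef
  have hρt : ∀ (t : ℝ) (ht : 0 < t), ρ t = (hρex t ht).choose := fun t ht => dif_pos ht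
  have step1 : (∀ f : Ω → ℝ, Continuous f →
      Tendsto (fun t : ℝ => (1 / t) * ∫ τ in (0:ℝ)..t, f (σ (x τ))) atTop
        (nhds (∫ ω, f ω ∂(q : Measure Ω)))) ↔ Tendsto ρ atTop (𝓝 q) := by
    constructor
    · intro hLHS
      apply ProbabilityMeasure.tendsto_iff_forall_integral_tendsto.mpr
      intro f
      apply (hLHS f f.continuous).congr'
      filter_upwards [eventually_gt_atTop (0:ℝ)] with t ht
      rw [hρt t ht]
      exact ((hρex t ht).choose_spec.1 f).symm
    · intro hT f hf
      have h2 := ProbabilityMeasure.tendsto_iff_forall_integral_tendsto.mp hT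
        (BoundedContinuousFunction.mkOfCompact ⟨f, hf⟩)
      apply h2.congr'
      filter_upwards [eventually_gt_atTop (0:ℝ)] with t ht
      rw [hρt t ht]
      exact ((hρex t ht).choose_spec.1 (BoundedContinuousFunction.mkOfCompact ⟨f, hf⟩))
  have step2 : Tendsto ρ atTop (𝓝 q) ↔
      Tendsto (fun t : ℝ => ‖μρ t - μ q‖ ^ 2) atTop (nhds 0) := by
    rw [mmdaux_tendsto_iff μ hμcont hinj ρ q, tendsto_iff_norm_sub_tendsto_zero]
    have hev : (fun t : ℝ => ‖μ (ρ t) - μ q‖) =ᶠ[atTop] (fun t : ℝ => ‖μρ t - μ q‖) := by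
      filter_upwards [eventually_gt_atTop (0:ℝ)] with t ht
      rw [hρt t ht, (hρex t ht).choose_spec.2]
    constructor
    · intro h
      have h1 : Tendsto (fun t : ℝ => ‖μρ t - μ q‖) atTop (𝓝 0) := h.congr' hev
      simpa using h1.pow 2
    · intro h
      have h1 : Tendsto (fun t : ℝ => Real.sqrt (‖μρ t - μ q‖ ^ 2)) atTop (𝓝 (Real.sqrt 0)) :=
        (Real.continuous_sqrt.tendsto _).comp h
      rw [Real.sqrt_zero] at h1
      have h2 : Tendsto (fun t : ℝ => ‖μρ t - μ q‖) atTop (𝓝 0) := by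
        apply h1.congr
        intro t
        rw [Real.sqrt_sq (norm_nonneg _)]
      exact h2.congr' hev.symm
  rw [step1, step2]
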